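/- Let m < 0 and let F : ℝ³ → ℂ be measurable such that for every N ∈ ℕ there exists C_N > 0 with |F(η)| ≤ C_N (1+|η₁|)^m (1+|η₂|+|η₃|)^{−N} for all η ∈ ℝ³. Let s, k₁, k₂, k₃ ∈ ℝ with k₁ ≥ 0 and max(s,0) + k₁ + m < −1/2. Then ∫_{ℝ³} ⟨η⟩^{2s} ⟨η₁⟩^{2k₁} ⟨η₂⟩^{2k₂} ⟨η₃⟩^{2k₃} |F(η)|² dη < ∞. -/
import Mathlib


open MeasureTheory

/-- The Japanese bracket `⟨t⟩ = (1+t²)^{1/2}`. -/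
noncomputable def jb (t : ℝ) : ℝ := Real.sqrt (1 + t ^ 2)

/-- `⟨η⟩ = (1+|η|²)^{1/2}` for `η ∈ ℝ³`. -/
noncomputable def jb3 (η : Fin 3 → ℝ) : ℝ :=
  Real.sqrt (1 + (η 0) ^ 2 + (η 1) ^ 2 + (η 2) ^ 2)

lemma jb_nonneg (t : ℝ) : 0 ≤ jb t := Real.sqrt_nonneg _

lemma one_le_jb (t : ℝ) : 1 ≤ jb t := by
  rw [jb, Real.one_le_sqrt]
  nlinarith [sq_nonneg t]

lemma jb_le (t : ℝ) : jb t ≤ 1 + |t| := by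
  rw [jb]
  have h : 1 + t ^ 2 ≤ (1 + |t|) ^ 2 := by nlinarith [abs_nonneg t, sq_abs t]
  calc Real.sqrt (1 + t ^ 2) ≤ Real.sqrt ((1 + |t|) ^ 2) := Real.sqrt_le_sqrt h
    _ = 1 + |t| := Real.sqrt_sq (by positivity)

lemma jb3_nonneg (η : Fin 3 → ℝ) : 0 ≤ jb3 η := Real.sqrt_nonneg _

lemma one_le_jb3 (η : Fin 3 → ℝ) : 1 ≤ jb3 η := by
  rw [jb3, Real.one_le_sqrt]
  nlinarith [sq_nonneg (η 0), sq_nonneg (η 1), sq_nonneg (η 2)]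

lemma jb3_le (η : Fin 3 → ℝ) : jb3 η ≤ (1 + |η 0|) * (1 + |η 1|) * (1 + |η 2|) := by
  rw [jb3]
  have h : 1 + (η 0) ^ 2 + (η 1) ^ 2 + (η 2) ^ 2
      ≤ ((1 + |η 0|) * (1 + |η 1|) * (1 + |η 2|)) ^ 2 := by
    nlinarith [abs_nonneg (η 0), abs_nonneg (η 1), abs_nonneg (η 2),
      sq_abs (η 0), sq_abs (η 1), sq_abs (η 2), sq_nonneg (|η 0| * |η 1|),
      sq_nonneg (|η 1| * |η 2|), sq_nonneg (|η 0| * |η 2|),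
      mul_nonneg (abs_nonneg (η 0)) (abs_nonneg (η 1)),
      mul_nonneg (abs_nonneg (η 1)) (abs_nonneg (η 2)),
      mul_nonneg (abs_nonneg (η 0)) (abs_nonneg (η 2)),
      mul_nonneg (mul_nonneg (abs_nonneg (η 0)) (abs_nonneg (η 1))) (abs_nonneg (η 2))]
  calc Real.sqrt (1 + (η 0) ^ 2 + (η 1) ^ 2 + (η 2) ^ 2)
      ≤ Real.sqrt (((1 + |η 0|) * (1 + |η 1|) * (1 + |η 2|)) ^ 2) := Real.sqrt_le_sqrt h
    _ = (1 + |η 0|) * (1 + |η 1|) * (1 + |η 2|) := Real.sqrt_sq (by positivity)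

lemma integrable_pow_lt (p : ℝ) (hp : p < -1) :
    Integrable (fun t : ℝ => (1 + |t|) ^ p) := by
  have h := integrable_one_add_norm (E := ℝ) (μ := volume) (r := -p)
    (by simp only [Module.finrank_self, Nat.cast_one]; linarith)
  simpa [Real.norm_eq_abs] using h

theorem stmt15 (m : ℝ) (hm : m < 0) (F : (Fin 3 → ℝ) → ℂ) (hF : Measurable F)
    (hbound : ∀ N : ℕ, ∃ C : ℝ, 0 < C ∧ ∀ η : Fin 3 → ℝ,
      ‖F η‖ ≤ C * (1 + |η 0|) ^ m * (1 + |η 1| + |η 2|) ^ (-(N : ℝ)))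
    (s k₁ k₂ k₃ : ℝ) (hk₁ : 0 ≤ k₁) (hsum : max s 0 + k₁ + m < -(1 / 2)) :
    ∫⁻ η : Fin 3 → ℝ, ENNReal.ofReal
      (jb3 η ^ (2 * s) * jb (η 0) ^ (2 * k₁) * jb (η 1) ^ (2 * k₂) * jb (η 2) ^ (2 * k₃) *
        ‖F η‖ ^ 2) < ⊤ := by
  set a : ℝ := max s 0 with ha
  have ha0 : 0 ≤ a := le_max_right _ _
  set b₂ : ℝ := max k₂ 0 with hb₂
  set b₃ : ℝ := max k₃ 0 with hb₃
  have hb₂0 : 0 ≤ b₂ := le_max_right _ _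
  have hb₃0 : 0 ≤ b₃ := le_max_right _ _
  set N : ℕ := ⌈2 * a + 2 * max b₂ b₃ + 2⌉₊ with hN
  have hNge : (2 * a + 2 * max b₂ b₃ + 2 : ℝ) ≤ N := Nat.le_ceil _
  obtain ⟨C, hC, hCF⟩ := hbound N
  set p₀ : ℝ := 2 * a + 2 * k₁ + 2 * m with hp₀def
  set p₁ : ℝ := 2 * a + 2 * b₂ - N with hp₁def
  set p₂ : ℝ := 2 * a + 2 * b₃ - N with hp₂def
  have hp₀ : p₀ < -1 := by rw [hp₀def]; linarith
  have hp₁ : p₁ < -1 := by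
    rw [hp₁def]; have := le_max_left b₂ b₃; linarith
  have hp₂ : p₂ < -1 := by
    rw [hp₂def]; have := le_max_right b₂ b₃; linarith
  set g : Fin 3 → ℝ → ℝ :=
    ![fun t => (1 + |t|) ^ p₀, fun t => (1 + |t|) ^ p₁, fun t => (1 + |t|) ^ p₂] with hg
  have hGint : Integrable (fun η : Fin 3 → ℝ => C ^ 2 * ∏ i, g i (η i)) := by
    refine Integrable.const_mul ?_ _
    refine Integrable.fintype_prod (𝕜 := ℝ) (fun i => ?_)
    fin_cases i
    · exact integrable_pow_lt p₀ hp₀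
    · exact integrable_pow_lt p₁ hp₁
    · exact integrable_pow_lt p₂ hp₂
  have key : ∀ η : Fin 3 → ℝ,
      jb3 η ^ (2 * s) * jb (η 0) ^ (2 * k₁) * jb (η 1) ^ (2 * k₂) * jb (η 2) ^ (2 * k₃) *
        ‖F η‖ ^ 2 ≤ C ^ 2 * ∏ i, g i (η i) := by
    intro η
    set x : ℝ := |η 0| with hx
    set y : ℝ := |η 1| with hy
    set z : ℝ := |η 2| with hz
    have hx0 : 0 ≤ x := abs_nonneg _
    have hy0 : 0 ≤ y := abs_nonneg _
    have hz0 : 0 ≤ z := abs_nonneg _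
    have hxp : (0:ℝ) < 1 + x := by linarith
    have hyp : (0:ℝ) < 1 + y := by linarith
    have hzp : (0:ℝ) < 1 + z := by linarith
    have hNneg : -(N:ℝ) ≤ 0 := neg_nonpos.mpr (Nat.cast_nonneg N)
    -- factor bounds
    have hA : jb3 η ^ (2 * s) ≤ (1 + x) ^ (2 * a) * (1 + y) ^ (2 * a) * (1 + z) ^ (2 * a) := by
      have h1 : jb3 η ^ (2 * s) ≤ jb3 η ^ (2 * a) :=
        Real.rpow_le_rpow_of_exponent_le (one_le_jb3 η) (by have := le_max_left s 0; linarith)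
      have h2 : jb3 η ^ (2 * a) ≤ ((1 + x) * (1 + y) * (1 + z)) ^ (2 * a) :=
        Real.rpow_le_rpow (jb3_nonneg η) (jb3_le η) (by linarith)
      calc jb3 η ^ (2 * s) ≤ ((1 + x) * (1 + y) * (1 + z)) ^ (2 * a) := h1.trans h2
        _ = (1 + x) ^ (2 * a) * (1 + y) ^ (2 * a) * (1 + z) ^ (2 * a) := by
            rw [Real.mul_rpow (by positivity) (by positivity),
              Real.mul_rpow (by positivity) (by positivity)]
    have hB : jb (η 0) ^ (2 * k₁) ≤ (1 + x) ^ (2 * k₁) :=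
      Real.rpow_le_rpow (jb_nonneg _) (jb_le _) (by linarith)
    have hC2 : jb (η 1) ^ (2 * k₂) ≤ (1 + y) ^ (2 * b₂) := by
      have h1 : jb (η 1) ^ (2 * k₂) ≤ jb (η 1) ^ (2 * b₂) :=
        Real.rpow_le_rpow_of_exponent_le (one_le_jb _) (by have := le_max_left k₂ 0; linarith)
      exact h1.trans (Real.rpow_le_rpow (jb_nonneg _) (jb_le _) (by linarith))
    have hD : jb (η 2) ^ (2 * k₃) ≤ (1 + z) ^ (2 * b₃) := by
      have h1 : jb (η 2) ^ (2 * k₃) ≤ jb (η 2) ^ (2 * b₃) :=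
        Real.rpow_le_rpow_of_exponent_le (one_le_jb _) (by have := le_max_left k₃ 0; linarith)
      exact h1.trans (Real.rpow_le_rpow (jb_nonneg _) (jb_le _) (by linarith))
    have hv1 : (1 + y + z) ^ (-(N:ℝ)) ≤ (1 + y) ^ (-(N:ℝ)) :=
      Real.rpow_le_rpow_of_nonpos hyp (by linarith) hNneg
    have hv2 : (1 + y + z) ^ (-(N:ℝ)) ≤ (1 + z) ^ (-(N:ℝ)) :=
      Real.rpow_le_rpow_of_nonpos hzp (by linarith) hNneg
    have hE : ‖F η‖ ^ 2 ≤
        C ^ 2 * ((1 + x) ^ (2 * m) * ((1 + y) ^ (-(N:ℝ)) * (1 + z) ^ (-(N:ℝ)))) := by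
      have h := hCF η
      calc ‖F η‖ ^ 2 ≤ (C * (1 + x) ^ m * (1 + y + z) ^ (-(N:ℝ))) ^ 2 :=
            pow_le_pow_left₀ (norm_nonneg _) h 2
        _ = C ^ 2 * (((1 + x) ^ m * (1 + x) ^ m) *
              ((1 + y + z) ^ (-(N:ℝ)) * (1 + y + z) ^ (-(N:ℝ)))) := by ring
        _ ≤ C ^ 2 * (((1 + x) ^ m * (1 + x) ^ m) *
              ((1 + y) ^ (-(N:ℝ)) * (1 + z) ^ (-(N:ℝ)))) := by
            refine mul_le_mul_of_nonneg_left (mul_le_mul_of_nonneg_left ?_ (by positivity))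
              (by positivity)
            exact mul_le_mul hv1 hv2 (Real.rpow_nonneg (by linarith) _)
              (Real.rpow_nonneg hyp.le _)
        _ = C ^ 2 * ((1 + x) ^ (2 * m) * ((1 + y) ^ (-(N:ℝ)) * (1 + z) ^ (-(N:ℝ)))) := by
            rw [← Real.rpow_add hxp, show m + m = 2 * m by ring]
    -- combine
    have hcomb : jb3 η ^ (2 * s) * jb (η 0) ^ (2 * k₁) * jb (η 1) ^ (2 * k₂) *
        jb (η 2) ^ (2 * k₃) * ‖F η‖ ^ 2
        ≤ ((1 + x) ^ (2 * a) * (1 + y) ^ (2 * a) * (1 + z) ^ (2 * a)) * (1 + x) ^ (2 * k₁) *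
          (1 + y) ^ (2 * b₂) * (1 + z) ^ (2 * b₃) *
          (C ^ 2 * ((1 + x) ^ (2 * m) * ((1 + y) ^ (-(N:ℝ)) * (1 + z) ^ (-(N:ℝ))))) := by
      refine mul_le_mul (mul_le_mul (mul_le_mul (mul_le_mul hA hB ?_ ?_) hC2 ?_ ?_) hD ?_ ?_)
        hE ?_ ?_
      · exact Real.rpow_nonneg (jb_nonneg _) _
      · positivity
      · exact Real.rpow_nonneg (jb_nonneg _) _
      · positivity
      · exact Real.rpow_nonneg (jb_nonneg _) _
      · positivity
      · positivity
      · positivity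
    refine hcomb.trans_eq ?_
    rw [Fin.prod_univ_three]
    simp only [hg, Matrix.cons_val_zero, Matrix.cons_val_one, Matrix.head_cons,
      Matrix.cons_val_two, Matrix.tail_cons]
    rw [hp₀def, hp₁def, hp₂def, sub_eq_add_neg, sub_eq_add_neg,
      Real.rpow_add hxp, Real.rpow_add hxp, Real.rpow_add hyp, Real.rpow_add hyp,
      Real.rpow_add hzp, Real.rpow_add hzp]
    ring
  refine lt_of_le_of_lt (lintegral_mono fun η => ENNReal.ofReal_le_ofReal (key η)) ?_
  exact hGint.lintegral_lt_top
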